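/- Let n ≥ 5 and let P = {t_1, t_2} be the pot over the single bond-edge type a with t_1 = {a, â, â} and t_2 = {a^{n-1}}. Then the construction matrix M(P) has the unique solution ((n−1)/n, 1/n); consequently m_P = n, i.e., the smallest multigraph realized by P has n vertices. -/

import Mathlib

/-!
Basic framework for flexible-tile DNA self-assembly.

Bond-edge types are elements of `Fin m`.  A cohesive end is either unhatted
(`Sum.inl a`) or hatted (`Sum.inr a`).  A tile is a finite multiset of cohesive
ends, and a pot is a finite set of tiles.
-/

/-- A tile over the bond-edge alphabet `Fin m`. -/
abbrev Tile (m : ℕ) : Type := Multiset (Fin m ⊕ Fin m)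

/-- A pot: a finite set of tiles over the alphabet `Fin m`. -/
abbrev Pot (m : ℕ) : Type := Finset (Tile m)

/-- A finite multigraph (nonempty finite vertex set, finite edge set; loops and
parallel edges allowed), edges recorded by their unordered pair of endpoints. -/
structure Multigraph where
  V : Type
  E : Type
  [fintypeV : Fintype V]
  [decEqV : DecidableEq V]
  [nonemptyV : Nonempty V]
  [fintypeE : Fintype E]
  ends : E → Sym2 V

attribute [instance] Multigraph.fintypeV Multigraph.decEqV
  Multigraph.nonemptyV Multigraph.fintypeE

/-- The order (number of vertices) of a multigraph. -/
def Multigraph.order (G : Multigraph) : ℕ := Fintype.card G.V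

/-- An assembly of `G` from tiles over `Fin m`: each edge gets an orientation
(an ordered pair of vertices compatible with its endpoints) and a bond-edge type. -/
structure Assembly (m : ℕ) (G : Multigraph) where
  orient : G.E → G.V × G.V
  label : G.E → Fin m
  orient_ends : ∀ e : G.E, G.ends e = s((orient e).1, (orient e).2)

/-- The tile of a vertex `v` under an assembly: one unhatted `a` for each edge
labeled `a` oriented out of `v`, one hatted `a` for each edge labeled `a`
oriented into `v`. -/
def Assembly.tileOf {m : ℕ} {G : Multigraph} (A : Assembly m G) (v : G.V) : Tile m :=
  (Finset.univ : Finset G.E).val.bind fun e =>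
    (if (A.orient e).1 = v then {Sum.inl (A.label e)} else 0) +
    (if (A.orient e).2 = v then {Sum.inr (A.label e)} else 0)

/-- `G` is realized by the pot `P`: there is an assembly of `G` all of whose
vertex tiles belong to `P`. -/
def Realizes {m : ℕ} (P : Pot m) (G : Multigraph) : Prop :=
  ∃ A : Assembly m G, ∀ v : G.V, A.tileOf v ∈ P

/-- `C(P)`: the class of multigraphs realized by `P`. -/
def CSet {m : ℕ} (P : Pot m) : Set Multigraph := {G | Realizes P G}

/-- `m_P`: the minimum order of a multigraph realized by `P`. -/
noncomputable def mP {m : ℕ} (P : Pot m) : ℕ :=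
  sInf {n | ∃ G ∈ CSet P, G.order = n}

/-- `C_min(P)`: the multigraphs realized by `P` of minimum order. -/
def Cmin {m : ℕ} (P : Pot m) : Set Multigraph :=
  {G ∈ CSet P | G.order = mP P}

/-- An isomorphism of multigraphs. -/
structure MultigraphIso (G H : Multigraph) where
  vEquiv : G.V ≃ H.V
  eEquiv : G.E ≃ H.E
  ends_eq : ∀ e : G.E, H.ends (eEquiv e) = (G.ends e).map vEquiv

/-- Two multigraphs are isomorphic. -/
def Isomorphic (G H : Multigraph) : Prop := Nonempty (MultigraphIso G H)

/-- Scenario 1: minimum number of tile types over all pots realizing `G`. -/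
noncomputable def T1 (G : Multigraph) : ℕ :=
  sInf {c | ∃ m : ℕ, ∃ P : Pot m, Realizes P G ∧ P.card = c}

/-- Scenario 1: minimum number of bond-edge types over all pots realizing `G`. -/
noncomputable def B1 (G : Multigraph) : ℕ :=
  sInf {m | ∃ P : Pot m, Realizes P G}

/-- Scenario 2: minimum number of tile types over pots `P` with `G ∈ C(P)` and
`m_P = |V(G)|`. -/
noncomputable def T2 (G : Multigraph) : ℕ :=
  sInf {c | ∃ m : ℕ, ∃ P : Pot m, Realizes P G ∧ mP P = G.order ∧ P.card = c}

/-- Scenario 2: minimum number of bond-edge types over pots `P` with `G ∈ C(P)`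
and `m_P = |V(G)|`. -/
noncomputable def B2 (G : Multigraph) : ℕ :=
  sInf {m | ∃ P : Pot m, Realizes P G ∧ mP P = G.order}

/-- Scenario 3: minimum number of tile types over pots `P` with `C_min(P)`
consisting exactly of the multigraphs isomorphic to `G`. -/
noncomputable def T3 (G : Multigraph) : ℕ :=
  sInf {c | ∃ m : ℕ, ∃ P : Pot m, Cmin P = {H | Isomorphic H G} ∧ P.card = c}

/-- Scenario 3: minimum number of bond-edge types over pots `P` with `C_min(P)`
consisting exactly of the multigraphs isomorphic to `G`. -/
noncomputable def B3 (G : Multigraph) : ℕ :=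
  sInf {m | ∃ P : Pot m, Cmin P = {H | Isomorphic H G}}

/-- The degree of a vertex (a loop contributes 2). -/
def Multigraph.degree (G : Multigraph) (v : G.V) : ℕ :=
  ∑ e : G.E, (if v ∈ G.ends e then (if (G.ends e).IsDiag then 2 else 1) else 0)

/-- `av(G)`: the number of distinct vertex degrees in `G`. -/
def av (G : Multigraph) : ℕ := (Finset.univ.image G.degree).card

/-- `ev(G)`: the number of distinct even vertex degrees in `G`. -/
def ev (G : Multigraph) : ℕ :=
  ((Finset.univ.image G.degree).filter (fun d => Even d)).card

/-- `ov(G)`: the number of distinct odd vertex degrees in `G`. -/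
def ov (G : Multigraph) : ℕ :=
  ((Finset.univ.image G.degree).filter (fun d => Odd d)).card

/-- `z i t`: the net number of cohesive ends of type `i` on tile `t`
(unhatted count minus hatted count). -/
def zval {m : ℕ} (i : Fin m) (t : Tile m) : ℤ :=
  (t.count (Sum.inl i) : ℤ) - (t.count (Sum.inr i) : ℤ)

/-- The wheel graph on `n` vertices: the hub is `none`; the outer-cycle
vertices are `some i` for `i : Fin (n-1)`.  Edge `Sum.inl i` is the spoke from
the hub to `some i`; edge `Sum.inr i` is the outer-cycle edge from `some i` to
`some ((i+1) mod (n-1))`. -/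
def wheel (n : ℕ) : Multigraph where
  V := Option (Fin (n - 1))
  E := Fin (n - 1) ⊕ Fin (n - 1)
  ends e :=
    match e with
    | Sum.inl i => s((none : Option (Fin (n - 1))), some i)
    | Sum.inr i => s(some i,
        some ⟨(i.val + 1) % (n - 1), Nat.mod_lt _ (by have := i.isLt; omega)⟩)

/-- The cycle graph on `n` vertices (vertices `none, some 0, …, some (n-2)`,
edge `k` joining the `k`-th and `(k+1 mod n)`-th vertices in this order). -/
def cycleVtx (n : ℕ) (k : Fin n) : Option (Fin (n - 1)) :=
  if h : k.val = 0 then none else some ⟨k.val - 1, by have := k.isLt; omega⟩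

def cycleGraph (n : ℕ) : Multigraph where
  V := Option (Fin (n - 1))
  E := Fin n
  ends k := s(cycleVtx n k,
    cycleVtx n ⟨(k.val + 1) % n, Nat.mod_lt _ (by have := k.isLt; omega)⟩)
section Aux
variable {G : Multigraph}

lemma count_tileOf_inl (A : Assembly 1 G) (v : G.V) :
    (A.tileOf v).count (Sum.inl 0) =
      (Finset.univ.filter (fun e => (A.orient e).1 = v)).card := by
  unfold Assembly.tileOf
  rw [Multiset.count_bind, Finset.card_filter]
  show _ = Finset.sum Finset.univ _
  rw [Finset.sum]
  congr 1
  apply Multiset.map_congr rfl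
  intro e _
  have hl : A.label e = 0 := Subsingleton.elim _ _
  rw [Multiset.count_add]
  split_ifs with h1 h2 h2 <;>
    simp [hl, Multiset.count_singleton]

lemma count_tileOf_inr (A : Assembly 1 G) (v : G.V) :
    (A.tileOf v).count (Sum.inr 0) =
      (Finset.univ.filter (fun e => (A.orient e).2 = v)).card := by
  unfold Assembly.tileOf
  rw [Multiset.count_bind, Finset.card_filter]
  show _ = Finset.sum Finset.univ _
  rw [Finset.sum]
  congr 1
  apply Multiset.map_congr rfl
  intro e _
  have hl : A.label e = 0 := Subsingleton.elim _ _
  rw [Multiset.count_add]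
  split_ifs with h1 h2 h2 <;>
    simp [hl, Multiset.count_singleton]

lemma sum_zval_eq_zero (A : Assembly 1 G) :
    ∑ v : G.V, zval 0 (A.tileOf v) = 0 := by
  have h : ∀ v, zval 0 (A.tileOf v) =
      ((Finset.univ.filter (fun e => (A.orient e).1 = v)).card : ℤ) -
      ((Finset.univ.filter (fun e => (A.orient e).2 = v)).card : ℤ) := by
    intro v
    rw [zval, count_tileOf_inl, count_tileOf_inr]
  simp only [h]
  rw [Finset.sum_sub_distrib]
  have h1 : ∀ f : G.E → G.V,
      ∑ v : G.V, ((Finset.univ.filter (fun e => f e = v)).card : ℤ)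
        = (Fintype.card G.E : ℤ) := by
    intro f
    push_cast
    rw [← Nat.cast_sum]
    congr 1
    simp only [Finset.card_filter]
    rw [Finset.sum_comm]
    simp only [Finset.sum_ite_eq, Finset.mem_univ, if_true]
    rw [Fintype.card, Finset.card_eq_sum_ones]
  rw [h1, h1, sub_self]

end Aux

lemma mod_succ_iff (m i j : ℕ) (hi : i < m) (hj : j < m) :
    (i + 1) % m = j ↔ i = (j + m - 1) % m := by
  have h1 : (i + 1) % m = if i + 1 = m then 0 else i + 1 := by
    split_ifs with h
    · simp [h]
    · exact Nat.mod_eq_of_lt (by omega)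
  have h2 : (j + m - 1) % m = if j = 0 then m - 1 else j - 1 := by
    split_ifs with h
    · subst h; simp only [Nat.zero_add]; exact Nat.mod_eq_of_lt (by omega)
    · rw [show j + m - 1 = (j - 1) + 1 * m by omega, Nat.add_mul_mod_self_right,
        Nat.mod_eq_of_lt (show j - 1 < m by omega)]
  rw [h1, h2]
  split_ifs <;> omega

/-- The canonical assembly of the wheel graph. -/
def wheelAssembly (n : ℕ) (hn : 5 ≤ n) : Assembly 1 (wheel n) where
  orient e :=
    match e with
    | Sum.inl i => (none, some i)
    | Sum.inr i => (some i,
        some ⟨(i.val + 1) % (n - 1), Nat.mod_lt _ (by have := i.isLt; omega)⟩)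
  label _ := 0
  orient_ends e := by cases e <;> rfl

lemma wheel_tile_hub (n : ℕ) (hn : 5 ≤ n) :
    (wheelAssembly n hn).tileOf none =
      Multiset.replicate (n - 1) (Sum.inl (0 : Fin 1)) := by
  ext a
  have hcard : ∀ p : (wheel n).E → Prop, ∀ _ : DecidablePred p,
      (Finset.univ.filter p).card = ∑ e : (wheel n).E, if p e then 1 else 0 := by
    intro p _; rw [Finset.card_filter]
  match a with
  | Sum.inl a0 =>
    have : a0 = 0 := Subsingleton.elim _ _
    subst this
    erw [count_tileOf_inl]; rw [Multiset.count_replicate, if_pos rfl, hcard]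
    erw [Fintype.sum_sum_type]
    dsimp only [wheel, wheelAssembly]
    simp [wheelAssembly]
  | Sum.inr a0 =>
    have : a0 = 0 := Subsingleton.elim _ _
    subst this
    erw [count_tileOf_inr]; rw [Multiset.count_replicate, if_neg (by simp), hcard]
    erw [Fintype.sum_sum_type]
    dsimp only [wheel, wheelAssembly]
    simp [wheelAssembly]

lemma wheel_tile_rim (n : ℕ) (hn : 5 ≤ n) (j : Fin (n - 1)) :
    (wheelAssembly n hn).tileOf (some j) =
      ({Sum.inl 0, Sum.inr 0, Sum.inr 0} : Tile 1) := by
  ext a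
  have hcard : ∀ p : (wheel n).E → Prop, ∀ _ : DecidablePred p,
      (Finset.univ.filter p).card = ∑ e : (wheel n).E, if p e then 1 else 0 := by
    intro p _; rw [Finset.card_filter]
  match a with
  | Sum.inl a0 =>
    have : a0 = 0 := Subsingleton.elim _ _
    subst this
    erw [count_tileOf_inl]; rw [hcard]
    erw [Fintype.sum_sum_type]
    dsimp only [wheel, wheelAssembly]
    simp [wheelAssembly, Finset.sum_ite_eq']
  | Sum.inr a0 =>
    have : a0 = 0 := Subsingleton.elim _ _
    subst this
    erw [count_tileOf_inr]; rw [hcard]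
    erw [Fintype.sum_sum_type]
    dsimp only [wheel, wheelAssembly]
    have h3 : ∀ i : Fin (n-1),
        ((⟨(i.val + 1) % (n - 1), Nat.mod_lt _ (by have := i.isLt; omega)⟩ : Fin (n-1)) = j) ↔
          (i = (⟨(j.val + (n-1) - 1) % (n-1), Nat.mod_lt _ (by have := j.isLt; omega)⟩ : Fin (n-1))) := by
      intro i
      rw [Fin.ext_iff, Fin.ext_iff]
      exact mod_succ_iff (n-1) i.val j.val i.isLt j.isLt
    simp [Finset.sum_ite_eq']
    simp only [h3]
    rw [Finset.filter_eq']
    simp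

/-- For `n ≥ 5` and the pot `{t₁, t₂}` over one bond-edge type with
`t₁ = {a, â, â}` and `t₂ = {a^{n-1}}`, the construction matrix has the unique
solution `((n-1)/n, 1/n)`, and consequently `m_P = n`. -/
theorem scenario12_pot_matrix (n : ℕ) (hn : 5 ≤ n)
    (t : Fin 2 → Tile 1)
    (ht1 : t 0 = ({Sum.inl 0, Sum.inr 0, Sum.inr 0} : Tile 1))
    (ht2 : t 1 = Multiset.replicate (n - 1) (Sum.inl (0 : Fin 1))) :
    (∀ r : Fin 2 → ℚ,
        ((∀ i : Fin 1, ∑ j, r j * (zval i (t j) : ℚ) = 0) ∧ ∑ j, r j = 1) ↔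
          (r 0 = ((n : ℚ) - 1) / (n : ℚ) ∧ r 1 = 1 / (n : ℚ))) ∧
    mP ({t 0, t 1} : Pot 1) = n := by
  have hn0 : (n : ℚ) ≠ 0 := Nat.cast_ne_zero.mpr (by omega)
  have hz0 : zval 0 (t 0) = -1 := by rw [ht1]; decide
  have hz1 : zval 0 (t 1) = (n : ℤ) - 1 := by
    rw [ht2]
    simp [zval, Multiset.count_replicate]
    omega
  constructor
  · intro r
    constructor
    · rintro ⟨h1, h2⟩
      have h0 := h1 0
      rw [Fin.sum_univ_two] at h0 h2
      rw [hz0, hz1] at h0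
      push_cast at h0
      have hr1 : r 1 = 1 / (n : ℚ) := by
        field_simp
        linear_combination h0 + h2
      refine ⟨?_, hr1⟩
      have : r 0 = 1 - 1 / (n : ℚ) := by rw [← hr1]; linarith
      rw [this]
      field_simp
    · rintro ⟨h1, h2⟩
      refine ⟨fun i => ?_, ?_⟩
      · have : i = 0 := Subsingleton.elim _ _
        subst this
        rw [Fin.sum_univ_two, hz0, hz1, h1, h2]
        push_cast
        field_simp
        ring
      · rw [Fin.sum_univ_two, h1, h2]
        field_simp
        ring
  · -- mP part
    have hwheel : Realizes ({t 0, t 1} : Pot 1) (wheel n) := by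
      refine ⟨wheelAssembly n hn, fun v => ?_⟩
      match v with
      | none =>
        rw [wheel_tile_hub n hn, ← ht2]
        exact Finset.mem_insert_of_mem (Finset.mem_singleton_self _)
      | some j =>
        rw [wheel_tile_rim n hn j, ← ht1]
        exact Finset.mem_insert_self _ _
    have horder : (wheel n).order = n := by
      show Fintype.card (Option (Fin (n - 1))) = n
      rw [Fintype.card_option, Fintype.card_fin]
      omega
    have hlow : ∀ G : Multigraph, Realizes ({t 0, t 1} : Pot 1) G → n ≤ G.order := by
      intro G ⟨A, hA⟩
      classical
      set k := (Finset.univ.filter (fun v => A.tileOf v = t 1)).card with hk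
      set k' := (Finset.univ.filter (fun v => ¬ A.tileOf v = t 1)).card with hk'
      have hN : k + k' = G.order := Finset.card_filter_add_card_filter_not _
      have hsum := sum_zval_eq_zero A
      rw [← Finset.sum_filter_add_sum_filter_not Finset.univ
        (fun v => A.tileOf v = t 1)] at hsum
      have e1 : ∑ v ∈ Finset.univ.filter (fun v => A.tileOf v = t 1),
          zval 0 (A.tileOf v) = (k : ℤ) * ((n : ℤ) - 1) := by
        rw [Finset.sum_congr rfl (fun v hv => by
          rw [(Finset.mem_filter.mp hv).2, hz1]), Finset.sum_const, hk]
        push_cast; ring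
      have e2 : ∑ v ∈ Finset.univ.filter (fun v => ¬ A.tileOf v = t 1),
          zval 0 (A.tileOf v) = -(k' : ℤ) := by
        have : ∀ v ∈ Finset.univ.filter (fun v => ¬ A.tileOf v = t 1),
            zval 0 (A.tileOf v) = -1 := by
          intro v hv
          have hne := (Finset.mem_filter.mp hv).2
          have hmem := hA v
          rcases Finset.mem_insert.mp hmem with h | h
          · rw [h, hz0]
          · exact absurd (Finset.mem_singleton.mp h) hne
        rw [Finset.sum_congr rfl this, Finset.sum_const, hk']
        push_cast; ring
      rw [e1, e2] at hsum
      have hkpos : 1 ≤ k := by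
        by_contra h
        have hk0 : k = 0 := by omega
        have hk'0 : (k' : ℤ) = 0 := by
          rw [hk0] at hsum; push_cast at hsum; linarith
        have : 0 < G.order := Fintype.card_pos
        omega
      have : (n : ℤ) ≤ (G.order : ℤ) := by
        have hNz : (G.order : ℤ) = (k : ℤ) + (k' : ℤ) := by
          push_cast [← hN]; ring
        nlinarith [hsum, hkpos, hNz]
      exact_mod_cast this
    apply le_antisymm
    · exact Nat.sInf_le (show ∃ G ∈ CSet ({t 0, t 1} : Pot 1), G.order = n from ⟨wheel n, hwheel, horder⟩)
    · have hne : {m | ∃ G ∈ CSet ({t 0, t 1} : Pot 1), G.order = m}.Nonempty :=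
        ⟨n, wheel n, hwheel, horder⟩
      apply le_csInf hne
      rintro N ⟨G, hG, rfl⟩
      exact hlow G hG
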